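/- Consider the least-squares problem f(x) = ⟨a₁,x⟩² + ⟨a₂,x⟩² on ℝ² where a₁ = (1,-1) + ε(1,1) and a₂ = -(1,-1) + ε(1,1) for 0 < ε < 1. The stochastic gradient (chosen as the gradient of one of the two terms) is always a scalar multiple of a₁ or a₂. For iterates with x₁+x₂ > 0, the coordinate-wise sign of any such nonzero stochastic gradient equals ±(1,-1), so signSGD started at x₀ = (1,1) keeps x₁+x₂ = 2 constant and f(xₜ) ≥ f(x₀) almost surely for any step-size sequence. -/

import Mathlib

/-- SignSGD counterexample on the smooth least-squares problem
`f x = ⟨a₁,x⟩² + ⟨a₂,x⟩²` with `a₁ = (1,-1) + ε(1,1)`, `a₂ = -(1,-1) + ε(1,1)`,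
`0 < ε < 1`. Stochastic gradients are scalar multiples `c t • a_{i t}` of the
data points. Any such nonzero stochastic gradient has coordinatewise sign
`±(1,-1)`, so signSGD started at `x₀ = (1,1)` keeps `x₁ + x₂ = 2` constant and
`f (x t) ≥ f (x 0)` for any step-size sequence. -/
theorem signSGD_smooth_counterexample
    (ε : ℝ) (hε : 0 < ε) (hε1 : ε < 1)
    (a : Fin 2 → Fin 2 → ℝ)
    (ha0 : a 0 = ![1 + ε, -1 + ε]) (ha1 : a 1 = ![-1 + ε, 1 + ε])
    (f : (Fin 2 → ℝ) → ℝ)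
    (hf : ∀ x, f x = (a 0 0 * x 0 + a 0 1 * x 1) ^ 2
        + (a 1 0 * x 0 + a 1 1 * x 1) ^ 2)
    (γ : ℕ → ℝ) (c : ℕ → ℝ) (idx : ℕ → Fin 2)
    (hc : ∀ t, c t ≠ 0)
    (g : ℕ → Fin 2 → ℝ) (hg : ∀ t, g t = c t • a (idx t))
    (x : ℕ → Fin 2 → ℝ) (hx0 : x 0 = ![1, 1])
    (hstep : ∀ t i, x (t + 1) i = x t i - γ t * Real.sign (g t i)) :
    (∀ t, (fun i => Real.sign (g t i)) = ![1, -1] ∨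
          (fun i => Real.sign (g t i)) = ![-1, 1]) ∧
    (∀ t, x t 0 + x t 1 = 2) ∧
    (∀ t, f (x t) ≥ f (x 0)) := by
  have hsign : ∀ t, (fun i => Real.sign (g t i)) = ![1, -1] ∨
      (fun i => Real.sign (g t i)) = ![-1, 1] := by
    intro t
    have hg0 : g t 0 = c t * a (idx t) 0 := by rw [hg]; simp
    have hg1 : g t 1 = c t * a (idx t) 1 := by rw [hg]; simp
    have ha : (a (idx t) 0 = 1 + ε ∧ a (idx t) 1 = -1 + ε) ∨
        (a (idx t) 0 = -1 + ε ∧ a (idx t) 1 = 1 + ε) := by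
      have h2 : idx t = 0 ∨ idx t = 1 := by omega
      rcases h2 with h2 | h2 <;> rw [h2] <;> [left; right] <;>
        constructor <;> simp [ha0, ha1]
    rcases lt_or_gt_of_ne (hc t) with hcneg | hcpos
    · rcases ha with ⟨h0, h1⟩ | ⟨h0, h1⟩
      · right
        funext i
        fin_cases i <;>
          simp [hg0, hg1, h0, h1, Real.sign_of_neg, Real.sign_of_pos,
            mul_pos_of_neg_of_neg hcneg (by linarith : (-1:ℝ) + ε < 0),
            mul_neg_of_neg_of_pos hcneg (by linarith : (0:ℝ) < 1 + ε)]
      · left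
        funext i
        fin_cases i <;>
          simp [hg0, hg1, h0, h1, Real.sign_of_neg, Real.sign_of_pos,
            mul_pos_of_neg_of_neg hcneg (by linarith : (-1:ℝ) + ε < 0),
            mul_neg_of_neg_of_pos hcneg (by linarith : (0:ℝ) < 1 + ε)]
    · rcases ha with ⟨h0, h1⟩ | ⟨h0, h1⟩
      · left
        funext i
        fin_cases i <;>
          simp [hg0, hg1, h0, h1, Real.sign_of_neg, Real.sign_of_pos,
            mul_pos hcpos (by linarith : (0:ℝ) < 1 + ε),
            mul_neg_of_pos_of_neg hcpos (by linarith : (-1:ℝ) + ε < 0)]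
      · right
        funext i
        fin_cases i <;>
          simp [hg0, hg1, h0, h1, Real.sign_of_neg, Real.sign_of_pos,
            mul_pos hcpos (by linarith : (0:ℝ) < 1 + ε),
            mul_neg_of_pos_of_neg hcpos (by linarith : (-1:ℝ) + ε < 0)]
  have hinv : ∀ t, x t 0 + x t 1 = 2 := by
    intro t
    induction t with
    | zero => simp [hx0]; norm_num
    | succ n ih =>
      have hs : Real.sign (g n 0) + Real.sign (g n 1) = 0 := by
        rcases hsign n with h | h <;>
        · have h0 := congrFun h 0
          have h1 := congrFun h 1
          rw [h0, h1]; simp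
      rw [hstep n 0, hstep n 1]
      linear_combination ih - γ n * hs
  refine ⟨hsign, hinv, ?_⟩
  intro t
  rw [hf, hf, ha0, ha1, hx0]
  have h := hinv t
  simp only [Matrix.cons_val_zero, Matrix.cons_val_one, Matrix.head_cons]
  have h1 : x t 1 = 2 - x t 0 := by linarith
  rw [h1]
  nlinarith [sq_nonneg (x t 0 - 1)]
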